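/- For α > 0 and distinct m, n ≥ 1, the exceptional Laguerre polynomials r_n(x) = -(x+α+1) L_{n-1}^{(α)}(x) + L_{n-2}^{(α)}(x) satisfy ∫_0^∞ r_m(x) r_n(x) e^{-x} x^α / (x+α)^2 dx = 0. -/

import Mathlib

open Polynomial MeasureTheory

/-- Classical (generalized) Laguerre polynomials
`L_n^{(α)}(x) = Σ_{k=0}^n (-1)^k C(n+α, n-k) x^k / k!`. -/
noncomputable def laguerreP (α : ℝ) (n : ℕ) : Polynomial ℝ :=
  ∑ k ∈ Finset.range (n + 1),
    C ((-1 : ℝ) ^ k *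
        (∏ i ∈ Finset.range (n - k), (α + (k : ℝ) + 1 + (i : ℝ))) /
        ((Nat.factorial (n - k) : ℝ) * (Nat.factorial k : ℝ))) * X ^ k

/-- `L_k^{(α)}` extended by `0` for `k < 0`. -/
noncomputable def Lz (α : ℝ) (k : ℤ) : Polynomial ℝ :=
  if k < 0 then 0 else laguerreP α k.toNat

/-- Exceptional Laguerre polynomials `r_n = -(x+α+1) L_{n-1}^{(α)} + L_{n-2}^{(α)}`. -/
noncomputable def rE (α : ℝ) (k : ℤ) : Polynomial ℝ :=
  -(X + C (α + 1)) * Lz α (k - 1) + Lz α (k - 2)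

lemma laguerreP_coeff (α : ℝ) (n k : ℕ) :
    (laguerreP α n).coeff k = if k ≤ n then
      (-1 : ℝ) ^ k * (∏ i ∈ Finset.range (n - k), (α + (k : ℝ) + 1 + (i : ℝ))) /
        ((Nat.factorial (n - k) : ℝ) * (Nat.factorial k : ℝ)) else 0 := by
  unfold laguerreP
  rw [finset_sum_coeff]
  simp only [coeff_C_mul, coeff_X_pow, mul_ite, mul_one, mul_zero]
  rw [Finset.sum_ite_eq (Finset.range (n+1)) k]
  simp [Nat.lt_succ_iff]

lemma laguerreP_zero (α : ℝ) : laguerreP α 0 = C 1 := by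
  unfold laguerreP; simp

lemma laguerreP_coeff_le (α : ℝ) {n k : ℕ} (h : k ≤ n) :
    (laguerreP α n).coeff k =
      (-1 : ℝ) ^ k * (∏ i ∈ Finset.range (n - k), (α + (k : ℝ) + 1 + (i : ℝ))) /
        ((Nat.factorial (n - k) : ℝ) * (Nat.factorial k : ℝ)) := by
  rw [laguerreP_coeff, if_pos h]

lemma laguerreP_coeff_gt (α : ℝ) {n k : ℕ} (h : n < k) :
    (laguerreP α n).coeff k = 0 := by
  rw [laguerreP_coeff, if_neg (by omega)]

/-- `P(c,t+1) = c * P(c-1,t+1) + P(c,t)` for the rising factorial. -/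
lemma prod_shift (t : ℝ) (c : ℕ) :
    (∏ i ∈ Finset.range (c+1), (t + 1 + (i:ℝ)))
      = (c+1) * (∏ i ∈ Finset.range c, (t + 1 + (i:ℝ)))
        + ∏ i ∈ Finset.range (c+1), (t + (i:ℝ)) := by
  rw [Finset.prod_range_succ, Finset.prod_range_succ']
  have h2 : (∏ k ∈ Finset.range c, (t + ((k:ℕ)+1 : ℕ))) = ∏ i ∈ Finset.range c, (t + 1 + (i:ℝ)) := by
    apply Finset.prod_congr rfl; intro i _; push_cast; ring
  rw [h2]; push_cast; ring

/-- R3: `L_{n+1}' = L_n' - L_n`. -/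
lemma lag_deriv_sub (α : ℝ) (n : ℕ) :
    derivative (laguerreP α (n+1)) = derivative (laguerreP α n) - laguerreP α n := by
  ext k
  rw [coeff_derivative, coeff_sub, coeff_derivative]
  rcases Nat.lt_or_ge n k with h | h
  · rw [laguerreP_coeff_gt α (by omega : n + 1 < k + 1),
      laguerreP_coeff_gt α (by omega : n < k + 1), laguerreP_coeff_gt α h]
    ring
  · obtain ⟨c, rfl⟩ : ∃ c, n = k + c := ⟨n - k, by omega⟩
    rw [laguerreP_coeff_le α (by omega : k + 1 ≤ k + c + 1),
      laguerreP_coeff_le α (by omega : k ≤ k + c)]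
    have e1 : k + c + 1 - (k+1) = c := by omega
    have e2 : k + c - k = c := by omega
    rw [e1, e2]
    rcases c with _ | d
    · rw [laguerreP_coeff_gt α (by omega : k + 0 < k + 1)]
      simp [pow_succ, Nat.factorial_succ]
      field_simp
    · rw [laguerreP_coeff_le α (by omega : k + 1 ≤ k + (d + 1))]
      have e3 : k + (d+1) - (k+1) = d := by omega
      rw [e3]
      have key := prod_shift (α + k + 1) d
      have cast1 : ∀ i : ℕ, (α + (↑(k+1):ℝ) + 1 + (i:ℝ)) = (α + (k:ℝ) + 1) + 1 + i := by
        intro i; push_cast; ring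
      simp only [cast1]
      have cast2 : (∏ i ∈ Finset.range (d+1), ((α + (k:ℝ) + 1) + (i:ℝ)))
          = ∏ i ∈ Finset.range (d+1), (α + (k:ℝ) + 1 + (i:ℝ)) := rfl
      rw [cast2] at key
      rw [key]
      have hf : ∀ a : ℕ, ((Nat.factorial a : ℝ)) ≠ 0 := fun a => by
        exact_mod_cast Nat.factorial_ne_zero a
      field_simp [Nat.factorial_succ]
      push_cast [Nat.factorial_succ]
      ring

/-- R2: `x L_{n+1}' = (n+1) L_{n+1} - (n+1+α) L_n`. -/
lemma lag_x_deriv (α : ℝ) (n : ℕ) :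
    X * derivative (laguerreP α (n+1))
      = C ((n:ℝ)+1) * laguerreP α (n+1) - C ((n:ℝ)+1+α) * laguerreP α n := by
  ext k
  rw [coeff_sub, coeff_C_mul, coeff_C_mul]
  rcases k with _ | j
  · rw [coeff_X_mul_zero, laguerreP_coeff_le α (by omega : 0 ≤ n + 1),
      laguerreP_coeff_le α (by omega : 0 ≤ n)]
    simp only [Nat.sub_zero, Nat.factorial_zero, pow_zero, one_mul]
    rw [Finset.prod_range_succ]
    have hf : ((Nat.factorial n : ℝ)) ≠ 0 := by exact_mod_cast Nat.factorial_ne_zero n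
    field_simp [Nat.factorial_succ]
    push_cast [Nat.factorial_succ]
    ring
  · rw [coeff_X_mul, coeff_derivative]
    rcases Nat.lt_or_ge n j with h | h
    · rw [laguerreP_coeff_gt α (by omega : n + 1 < j + 1),
        laguerreP_coeff_gt α (by omega : n < j + 1)]
      ring
    · obtain ⟨c, rfl⟩ : ∃ c, n = j + c := ⟨n - j, by omega⟩
      rw [laguerreP_coeff_le α (by omega : j + 1 ≤ j + c + 1)]
      have e1 : j + c + 1 - (j+1) = c := by omega
      rw [e1]
      rcases c with _ | d
      · rw [laguerreP_coeff_gt α (by omega : j + 0 < j + 1)]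
        simp
        ring
      · rw [laguerreP_coeff_le α (by omega : j + 1 ≤ j + (d + 1))]
        have e3 : j + (d+1) - (j+1) = d := by omega
        rw [e3, Finset.prod_range_succ]
        have hf : ∀ a : ℕ, ((Nat.factorial a : ℝ)) ≠ 0 := fun a => by
          exact_mod_cast Nat.factorial_ne_zero a
        field_simp [Nat.factorial_succ]
        push_cast [Nat.factorial_succ]
        ring

/-- R1: the classical Laguerre ODE `x L_n'' + (α+1-x) L_n' + n L_n = 0`. -/
lemma lag_ode (α : ℝ) (n : ℕ) :
    X * derivative (derivative (laguerreP α n)) + (C (α+1) - X) * derivative (laguerreP α n)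
      + C (n:ℝ) * laguerreP α n = 0 := by
  rcases n with _ | n
  · simp [laguerreP_zero]
  · have h2 := lag_x_deriv α n
    have h3 := lag_deriv_sub α n
    have h2' := congrArg derivative h2
    rw [derivative_mul, derivative_X, derivative_sub, derivative_C_mul, derivative_C_mul] at h2'
    have hc : ((n+1 : ℕ) : ℝ) = (n:ℝ)+1 := by push_cast; ring
    rw [hc]
    simp only [C_add, C_1] at h2 h2' ⊢
    linear_combination h2' + (C (n:ℝ) + 1 + C α) * h3 - h2

noncomputable def Vlag (α : ℝ) : ℕ → Polynomial ℝ
  | 0 => 0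
  | (j+1) => laguerreP α j

/-- `ρ j = r_{j+1}`. -/
noncomputable def rho (α : ℝ) (j : ℕ) : Polynomial ℝ :=
  -(X + C (α + 1)) * laguerreP α j + Vlag α j

/-- auxiliary identities for the pair (u, v) = (L_j, V_j). -/
lemma lag_pair_deriv (α : ℝ) (j : ℕ) :
    derivative (laguerreP α j) = derivative (Vlag α j) - Vlag α j := by
  rcases j with _ | j
  · simp [laguerreP_zero, Vlag]
  · simpa [Vlag] using lag_deriv_sub α j

lemma lag_pair_xderiv (α : ℝ) (j : ℕ) :
    X * derivative (laguerreP α j)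
      = C (j:ℝ) * laguerreP α j - C ((j:ℝ)+α) * Vlag α j := by
  rcases j with _ | j
  · simp [laguerreP_zero, Vlag]
  · have := lag_x_deriv α j
    push_cast
    simpa [Vlag] using this

/-- The exceptional (X₁-Laguerre) ODE for `ρ j = r_{j+1}`:
`x(x+α) ρ'' + ((α+1-x)(x+α) - 2x) ρ' + (j(x+α) + x - α) ρ = 0`. -/
lemma rho_ode (α : ℝ) (j : ℕ) :
    X * (X + C α) * derivative (derivative (rho α j))
      + ((C (α+1) - X) * (X + C α) - 2 * X) * derivative (rho α j)
      + (C (j:ℝ) * (X + C α) + X - C α) * rho α j = 0 := by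
  have h1 := lag_ode α j
  have h2 := lag_pair_xderiv α j
  have h3 := lag_pair_deriv α j
  have h3' := congrArg derivative h3
  rw [derivative_sub] at h3'
  unfold rho
  simp only [derivative_add, derivative_sub, derivative_mul, derivative_neg, derivative_X,
    derivative_C, derivative_one, derivative_zero, C_add, C_1] at h1 h2 h3 h3' ⊢
  linear_combination (-(X + C α)^2) * h1 + (X + C α) * h2
    + (2*X - (C α + 1) * (X + C α)) * h3 + (-(X * (X + C α))) * h3'

lemma rho_deriv_eval (α : ℝ) (j : ℕ) :
    (derivative (rho α j)).eval (-α) = (rho α j).eval (-α) := by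
  have h3 := lag_pair_deriv α j
  unfold rho
  simp only [derivative_add, derivative_mul, derivative_neg, derivative_X, derivative_C,
    derivative_one, derivative_zero, C_add, C_1]
  rw [h3]
  simp only [eval_add, eval_mul, eval_neg, eval_sub, eval_X, eval_C, eval_one, eval_zero]
  ring

/-- the Wronskian `W = ρ_a' ρ_b - ρ_a ρ_b'`. -/
noncomputable def Wr (α : ℝ) (a b : ℕ) : Polynomial ℝ :=
  derivative (rho α a) * rho α b - rho α a * derivative (rho α b)

lemma wronskian_ode (α : ℝ) (a b : ℕ) :
    X * (X + C α) * derivative (Wr α a b)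
      + ((C (α+1) - X) * (X + C α) - 2 * X) * Wr α a b
      = (C (b:ℝ) - C (a:ℝ)) * (X + C α) * (rho α a * rho α b) := by
  have ha := rho_ode α a
  have hb := rho_ode α b
  unfold Wr
  simp only [derivative_sub, derivative_mul]
  linear_combination (rho α b) * ha - (rho α a) * hb

lemma X_add_C_ne_zero' (α : ℝ) : (X + C α : Polynomial ℝ) ≠ 0 := by
  have : (X + C α : Polynomial ℝ) = X - C (-α) := by rw [map_neg, sub_neg_eq_add]
  rw [this]
  exact X_sub_C_ne_zero (-α)

lemma wronskian_root (α : ℝ) (a b : ℕ) : (X + C α) ∣ Wr α a b := by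
  have : (X + C α : Polynomial ℝ) = X - C (-α) := by rw [map_neg, sub_neg_eq_add]
  rw [this, dvd_iff_isRoot]
  unfold Wr IsRoot
  simp only [eval_sub, eval_mul]
  rw [rho_deriv_eval, rho_deriv_eval]
  ring

/-- the master identity (★): with `(X+Cα) Q = W`,
`x(x+α) Q' + ((α+1-x)(x+α) - x) Q = (b-a) ρ_a ρ_b`. -/
lemma star_identity (α : ℝ) (a b : ℕ) (Q : Polynomial ℝ) (hQ : Wr α a b = (X + C α) * Q) :
    X * (X + C α) * derivative Q + ((C (α+1) - X) * (X + C α) - X) * Q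
      = (C (b:ℝ) - C (a:ℝ)) * (rho α a * rho α b) := by
  apply mul_left_cancel₀ (X_add_C_ne_zero' α)
  have hw := wronskian_ode α a b
  rw [hQ] at hw
  have hd : derivative ((X + C α) * Q) = Q + (X + C α) * derivative Q := by
    simp only [derivative_mul, derivative_add, derivative_X, derivative_C]
    ring
  rw [hd] at hw
  linear_combination hw

lemma rE_eq_rho (α : ℝ) (n : ℕ) (hn : 1 ≤ n) : rE α (n : ℤ) = rho α (n - 1) := by
  obtain ⟨k, rfl⟩ : ∃ k, n = k + 1 := ⟨n - 1, by omega⟩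
  unfold rE rho Lz
  rcases k with _ | k'
  · norm_num
    rfl
  · have e1 : ((k' + 1 + 1 : ℕ) : ℤ) - 1 = ((k' + 1 : ℕ) : ℤ) := by push_cast; ring
    have e2 : ((k' + 1 + 1 : ℕ) : ℤ) - 2 = ((k' : ℕ) : ℤ) := by push_cast; ring
    rw [e1, e2]
    have h1 : ¬ (((k' + 1 : ℕ) : ℤ) < 0) := by omega
    have h2 : ¬ (((k' : ℕ) : ℤ) < 0) := by omega
    rw [if_neg h1, if_neg h2]
    simp only [Int.toNat_natCast]
    have : k' + 1 + 1 - 1 = k' + 1 := by omega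
    rw [this]
    rfl

/-! ### Analysis -/

open Real Set Filter

lemma poly_abs_bound (p : Polynomial ℝ) {x : ℝ} (hx : 0 < x) :
    |p.eval x| ≤ ∑ k ∈ Finset.range (p.natDegree + 1), |p.coeff k| * x ^ k := by
  rw [Polynomial.eval_eq_sum_range]
  refine (Finset.abs_sum_le_sum_abs _ _).trans ?_
  apply Finset.sum_le_sum
  intro k _
  rw [abs_mul, abs_pow, abs_of_pos hx]

lemma integrableOn_poly_weight (α : ℝ) (hα : 0 < α) (p : Polynomial ℝ) :
    IntegrableOn (fun x => p.eval x * (Real.exp (-x) * x ^ α / (x + α) ^ 2))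
      (Set.Ioi (0:ℝ)) := by
  have hg : IntegrableOn (fun x => ∑ k ∈ Finset.range (p.natDegree + 1),
      |p.coeff k| / α ^ 2 * (Real.exp (-x) * x ^ (α + k))) (Set.Ioi (0:ℝ)) := by
    apply MeasureTheory.integrable_finset_sum
    intro k _
    have h1 : (0:ℝ) < α + k + 1 := by positivity
    have := (Real.GammaIntegral_convergent h1).const_mul (|p.coeff k| / α ^ 2)
    simpa using this
  apply MeasureTheory.Integrable.mono' hg
  · apply ContinuousOn.aestronglyMeasurable _ measurableSet_Ioi
    apply ContinuousOn.mul (Polynomial.continuousOn p)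
    apply ContinuousOn.div
    · exact (Real.continuous_exp.comp continuous_neg).continuousOn.mul
        (fun x hx => (Real.continuousAt_rpow_const x α (Or.inl (ne_of_gt hx))).continuousWithinAt)
    · exact ((continuous_id.add continuous_const).pow 2).continuousOn
    · intro x hx
      have : (0:ℝ) < x + α := by have := mem_Ioi.mp hx; positivity
      positivity
  · rw [MeasureTheory.ae_restrict_iff' measurableSet_Ioi]
    apply MeasureTheory.ae_of_all
    intro x hx
    have hx0 : (0:ℝ) < x := mem_Ioi.mp hx
    have hxα : (0:ℝ) < x + α := by positivity
    have hnn : (0:ℝ) ≤ Real.exp (-x) * x ^ α / (x + α) ^ 2 := by positivity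
    rw [norm_mul, Real.norm_eq_abs, Real.norm_eq_abs, abs_of_nonneg hnn]
    have hb1 : Real.exp (-x) * x ^ α / (x + α) ^ 2 ≤ Real.exp (-x) * x ^ α / α ^ 2 := by
      apply div_le_div_of_nonneg_left (by positivity) (by positivity)
      apply pow_le_pow_left₀ (le_of_lt hα) (by linarith)
    calc |p.eval x| * (Real.exp (-x) * x ^ α / (x + α) ^ 2)
        ≤ (∑ k ∈ Finset.range (p.natDegree + 1), |p.coeff k| * x ^ k) *
            (Real.exp (-x) * x ^ α / α ^ 2) := by
          apply mul_le_mul (poly_abs_bound p hx0) hb1 hnn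
          positivity
      _ = ∑ k ∈ Finset.range (p.natDegree + 1),
            |p.coeff k| / α ^ 2 * (Real.exp (-x) * x ^ (α + k)) := by
          rw [Finset.sum_mul]
          apply Finset.sum_congr rfl
          intro k _
          have : x ^ (α + (k:ℝ)) = x ^ α * x ^ k := by
            rw [Real.rpow_add hx0, Real.rpow_natCast]
          rw [this]
          field_simp

/-- the antiderivative `F x = e^{-x} x^{α+1} Q(x) / (x+α)`. -/
noncomputable def Fa (α : ℝ) (Q : Polynomial ℝ) (x : ℝ) : ℝ :=
  Real.exp (-x) * x ^ (α + 1) * Q.eval x / (x + α)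

lemma Fa_hasDerivAt (α : ℝ) (hα : 0 < α) (a b : ℕ) (Q : Polynomial ℝ)
    (hQ : Wr α a b = (X + C α) * Q) {x : ℝ} (hx : 0 < x) :
    HasDerivAt (Fa α Q)
      (((b:ℝ) - a) * ((rho α a).eval x * (rho α b).eval x *
        (Real.exp (-x) * x ^ α / (x + α) ^ 2))) x := by
  have hxα : x + α ≠ 0 := by positivity
  have h1 : HasDerivAt (fun y : ℝ => Real.exp (-y)) (-Real.exp (-x)) x := by
    simpa using ((hasDerivAt_neg x).exp)
  have h2 : HasDerivAt (fun y : ℝ => y ^ (α + 1)) ((α + 1) * x ^ α) x := by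
    have := Real.hasDerivAt_rpow_const (x := x) (p := α + 1) (Or.inl (ne_of_gt hx))
    simpa using this
  have h3 := Q.hasDerivAt x
  have h4 : HasDerivAt (fun y : ℝ => y + α) 1 x := (hasDerivAt_id x).add_const α
  have hD := (((h1.mul h2).mul h3).div h4 hxα)
  have hstar := congrArg (Polynomial.eval x) (star_identity α a b Q hQ)
  simp only [eval_add, eval_mul, eval_sub, eval_X, eval_C, eval_one, eval_ofNat] at hstar
  refine hD.congr_deriv ?_
  symm
  simp only [Pi.mul_apply]
  have hpow : x ^ (α + 1) = x ^ α * x := Real.rpow_add_one (ne_of_gt hx) α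
  rw [hpow]
  field_simp
  linear_combination (-1 : ℝ) * hstar

lemma Fa_tendsto_atTop (α : ℝ) (hα : 0 < α) (Q : Polynomial ℝ) :
    Tendsto (Fa α Q) atTop (nhds 0) := by
  set N : ℕ := ⌈α⌉₊ + 1 with hN
  have hg : Tendsto (fun x => |Polynomial.eval x (X ^ N * Q)| / Real.exp x / α)
      atTop (nhds 0) := by
    have h0 := Polynomial.tendsto_div_exp_atTop (X ^ N * Q : Polynomial ℝ)
    have h1 : Tendsto (fun x => |Polynomial.eval x (X ^ N * Q) / Real.exp x|)
        atTop (nhds 0) := by simpa using h0.abs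
    have := h1.div_const α
    simpa [abs_div, Real.abs_exp, div_div] using this
  apply squeeze_zero_norm' _ hg
  filter_upwards [eventually_ge_atTop (1:ℝ)] with x hx1
  have hx0 : (0:ℝ) < x := by linarith
  have hxα : (0:ℝ) < x + α := by positivity
  have hb1 : x ^ (α + 1) ≤ x ^ (N:ℕ) := by
    rw [← Real.rpow_natCast x N]
    apply Real.rpow_le_rpow_of_exponent_le hx1
    have := Nat.le_ceil α
    push_cast [hN]
    linarith
  have hb2 : (α:ℝ)⁻¹ ≥ (x + α)⁻¹ := by
    apply inv_anti₀ hα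
    linarith
  have hpos : (0:ℝ) ≤ x ^ (α+1) := le_of_lt (Real.rpow_pos_of_pos hx0 _)
  rw [Real.norm_eq_abs]
  unfold Fa
  rw [abs_div, abs_of_pos hxα, abs_mul, abs_mul, Real.abs_exp]
  calc Real.exp (-x) * |x ^ (α+1)| * |Q.eval x| / (x + α)
      ≤ Real.exp (-x) * (x:ℝ) ^ (N:ℕ) * |Q.eval x| / α := by
        apply div_le_div₀ (by positivity)
        · apply mul_le_mul _ le_rfl (abs_nonneg _) (by positivity)
          apply mul_le_mul le_rfl _ (abs_nonneg _) (le_of_lt (Real.exp_pos _))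
          rw [abs_of_nonneg hpos]; exact hb1
        · exact hα
        · linarith
    _ = |Polynomial.eval x (X ^ N * Q)| / Real.exp x / α := by
        rw [Polynomial.eval_mul, Polynomial.eval_pow, Polynomial.eval_X, abs_mul, abs_pow,
          abs_of_pos hx0, Real.exp_neg]
        field_simp

lemma Fa_continuousWithinAt (α : ℝ) (hα : 0 < α) (Q : Polynomial ℝ) :
    ContinuousWithinAt (Fa α Q) (Set.Ici 0) 0 := by
  apply ContinuousAt.continuousWithinAt
  unfold Fa
  apply ContinuousAt.div
  · exact ((Real.continuous_exp.comp continuous_neg).continuousAt.mul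
      (Real.continuousAt_rpow_const 0 (α+1) (Or.inr (by positivity)))).mul
      (Polynomial.continuousAt Q)
  · exact (continuous_id.add continuous_const).continuousAt
  · simpa using ne_of_gt hα

lemma Fa_zero (α : ℝ) (hα : 0 < α) (Q : Polynomial ℝ) : Fa α Q 0 = 0 := by
  unfold Fa
  rw [Real.zero_rpow (by positivity)]
  simp

/-- orthogonality of the exceptional Laguerre polynomials with respect
to `e^{-x} x^α / (x+α)²` on `(0, ∞)`. -/
theorem exceptional_laguerre_orthogonal (α : ℝ) (hα : 0 < α) (m n : ℕ)
    (hm : 1 ≤ m) (hn : 1 ≤ n) (hmn : m ≠ n) :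
    ∫ x in Set.Ioi (0 : ℝ), (rE α (m : ℤ)).eval x * (rE α (n : ℤ)).eval x *
      (Real.exp (-x) * x ^ α / (x + α) ^ 2) = 0 := by
  obtain ⟨Q, hQ⟩ := wronskian_root α (m - 1) (n - 1)
  have hrm : rE α (m:ℤ) = rho α (m - 1) := rE_eq_rho α m hm
  have hrn : rE α (n:ℤ) = rho α (n - 1) := rE_eq_rho α n hn
  have hcast : (((n - 1 : ℕ)):ℝ) - ((m - 1 : ℕ):ℝ) = (n:ℝ) - m := by
    rw [Nat.cast_sub hn, Nat.cast_sub hm]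
    push_cast
    ring
  have hc : ((n:ℝ) - m) ≠ 0 := by
    intro h
    apply hmn
    have : (m:ℝ) = n := by linarith [sub_eq_zero.mp h]
    exact_mod_cast this
  have hint : IntegrableOn (fun x => (rho α (m-1)).eval x * (rho α (n-1)).eval x *
      (Real.exp (-x) * x ^ α / (x + α) ^ 2)) (Set.Ioi (0:ℝ)) := by
    have := integrableOn_poly_weight α hα (rho α (m-1) * rho α (n-1))
    simpa [eval_mul] using this
  have hderiv : ∀ x ∈ Set.Ioi (0:ℝ), HasDerivAt (Fa α Q)
      ((fun x => ((n:ℝ) - m) * ((rho α (m-1)).eval x * (rho α (n-1)).eval x *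
        (Real.exp (-x) * x ^ α / (x + α) ^ 2))) x) x := by
    intro x hx
    have := Fa_hasDerivAt α hα (m-1) (n-1) Q hQ (Set.mem_Ioi.mp hx)
    rw [hcast] at this
    exact this
  have key := MeasureTheory.integral_Ioi_of_hasDerivAt_of_tendsto
    (Fa_continuousWithinAt α hα Q) hderiv (hint.const_mul _)
    (Fa_tendsto_atTop α hα Q)
  rw [Fa_zero α hα Q, sub_zero, MeasureTheory.integral_const_mul] at key
  rw [hrm, hrn]
  exact (mul_eq_zero.mp key).resolve_left hc
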